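/- arXiv:2308.12485 — 3 statements merged into one kernel-verified Lean document; each statement's English description precedes it below -/
import Mathlib

section
/- Unbiasedness of the risk estimate: suppose y is a random vector in R^T with E y = θ and Var(y) = Σ, Σ positive definite, Λ positive semidefinite, and μ ∈ R^T. Define θ̂(μ,Λ) = (I − Λ(Λ+Σ)^{-1})μ + Λ(Λ+Σ)^{-1} y and URE(μ,Λ) = tr(Σ) − 2 tr((Λ+Σ)^{-1}Σ²) + (y−μ)'(Λ+Σ)^{-1}Σ²(Λ+Σ)^{-1}(y−μ). Then E[URE(μ,Λ)] = E‖θ̂(μ,Λ) − θ‖². -/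
open Matrix MeasureTheory

/-- Product of two `L²` functions is integrable (polarization). -/
lemma memL2_integrable_mul {Ω : Type*} [MeasurableSpace Ω] {μ : Measure Ω}
    {f g : Ω → ℝ} (hf : MemLp f 2 μ) (hg : MemLp g 2 μ) :
    Integrable (fun ω => f ω * g ω) μ := by
  have h1 : Integrable (fun ω => (f ω + g ω) ^ 2) μ := by
    simpa using (hf.add hg).integrable_sq
  have h2 : Integrable (fun ω => f ω ^ 2) μ := hf.integrable_sq
  have h3 : Integrable (fun ω => g ω ^ 2) μ := hg.integrable_sq
  have heq : (fun ω => f ω * g ω)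
      = fun ω => (((f ω + g ω) ^ 2 - f ω ^ 2) - g ω ^ 2) * (1 / 2) := by
    funext ω; ring
  rw [heq]
  exact ((h1.sub h2).sub h3).mul_const _

/-- Unbiasedness of the risk estimate: for a square-integrable random vector `y`
with mean `θ` and covariance `S` (no normality assumed), `Λ` positive semidefinite,
and any `μv ∈ ℝ^T`, the expectation of
`URE(μ,Λ) = tr Σ − 2 tr((Λ+Σ)⁻¹Σ²) + (y−μ)'(Λ+Σ)⁻¹Σ²(Λ+Σ)⁻¹(y−μ)`
equals the risk `E‖θ̂(μ,Λ) − θ‖²` of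
`θ̂(μ,Λ) = (I − Λ(Λ+Σ)⁻¹)μ + Λ(Λ+Σ)⁻¹ y`. -/
theorem ure_unbiased {T : ℕ} {Ω : Type*} [MeasurableSpace Ω]
    (μ : Measure Ω) [IsProbabilityMeasure μ]
    (y : Ω → Fin T → ℝ) (θ μv : Fin T → ℝ)
    (S Λ : Matrix (Fin T) (Fin T) ℝ)
    (hS : S.PosDef) (hΛ : Λ.PosSemidef)
    (hmeas : Measurable y)
    (hL2 : ∀ i, MemLp (fun ω => y ω i) 2 μ)
    (hmean : ∀ i, ∫ ω, y ω i ∂μ = θ i)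
    (hvar : ∀ i j, ∫ ω, (y ω i - θ i) * (y ω j - θ j) ∂μ = S i j) :
    (∫ ω, (Matrix.trace S - 2 * Matrix.trace ((Λ + S)⁻¹ * (S * S)) +
        (y ω - μv) ⬝ᵥ ((Λ + S)⁻¹ * (S * S) * (Λ + S)⁻¹).mulVec (y ω - μv)) ∂μ) =
      ∫ ω,
        (((1 - Λ * (Λ + S)⁻¹).mulVec μv + (Λ * (Λ + S)⁻¹).mulVec (y ω)) - θ) ⬝ᵥ
          (((1 - Λ * (Λ + S)⁻¹).mulVec μv + (Λ * (Λ + S)⁻¹).mulVec (y ω)) - θ) ∂μ := by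
  classical
  set A : Matrix (Fin T) (Fin T) ℝ := (Λ + S)⁻¹ with hA
  set B : Matrix (Fin T) (Fin T) ℝ := A * (S * S) * A with hB
  set M : Matrix (Fin T) (Fin T) ℝ := Λ * A with hM
  set e : Ω → Fin T → ℝ := fun ω => y ω - θ with he
  set d : Fin T → ℝ := θ - μv with hd
  -- symmetry facts
  have hSt : Sᵀ = S := by
    ext i j
    rw [Matrix.transpose_apply]
    simpa using congrFun (congrFun hS.1 i) j
  have hΛt : Λᵀ = Λ := by
    ext i j
    rw [Matrix.transpose_apply]
    simpa using congrFun (congrFun hΛ.1 i) j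
  have hΛSpd : (Λ + S).PosDef := Matrix.PosDef.posSemidef_add hΛ hS
  have hΛSt : (Λ + S)ᵀ = Λ + S := by rw [Matrix.transpose_add, hΛt, hSt]
  have hAt : Aᵀ = A := by rw [hA, Matrix.transpose_nonsing_inv, hΛSt]
  have hu : IsUnit (Λ + S).det := hΛSpd.det_pos.ne'.isUnit
  have hinv1 : A * (Λ + S) = 1 := Matrix.nonsing_inv_mul _ hu
  have hinv2 : (Λ + S) * A = 1 := Matrix.mul_nonsing_inv _ hu
  have h1 : M = 1 - S * A := by
    have h : Λ * A + S * A = 1 := by rw [← Matrix.add_mul, hinv2]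
    rw [hM]; exact eq_sub_of_add_eq h
  have h2 : A * Λ = 1 - A * S := by
    have h : A * Λ + A * S = 1 := by rw [← Matrix.mul_add, hinv1]
    exact eq_sub_of_add_eq h
  have hSA : S * A = 1 - M := by rw [h1, sub_sub_cancel]
  have hSSt : (S * S)ᵀ = S * S := by rw [Matrix.transpose_mul, hSt]
  have hBt : Bᵀ = B := by
    simp only [hB, Matrix.transpose_mul, hSt, hAt, Matrix.mul_assoc]
  have hMt : Mᵀ = A * Λ := by rw [hM, Matrix.transpose_mul, hAt, hΛt]
  have hSAt : (S * A)ᵀ = A * S := by rw [Matrix.transpose_mul, hAt, hSt]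
  have hCm : (A * Λ) * M = 1 - S * A - A * S + B := by
    rw [h1, h2, hB]; noncomm_ring
  have hASSA : (A * S) * (S * A) = B := by rw [hB]; noncomm_ring
  -- transpose helper
  have htr : ∀ (P : Matrix (Fin T) (Fin T) ℝ) (x z : Fin T → ℝ),
      x ⬝ᵥ P.mulVec z = (Pᵀ.mulVec x) ⬝ᵥ z := by
    intro P x z
    rw [dotProduct_mulVec, Matrix.mulVec_transpose]
  -- probabilistic facts
  have he2 : ∀ i, MemLp (fun ω => e ω i) 2 μ := by
    intro i
    have h := (hL2 i).sub (memLp_const (θ i))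
    simpa [he, Pi.sub_apply, Pi.sub_def] using h
  have heint : ∀ i, Integrable (fun ω => e ω i) μ := fun i => (he2 i).integrable one_le_two
  have hee : ∀ i j, Integrable (fun ω => e ω i * e ω j) μ :=
    fun i j => memL2_integrable_mul (he2 i) (he2 j)
  have hcov : ∀ i j, ∫ ω, e ω i * e ω j ∂μ = S i j := by
    intro i j
    simpa [he, Pi.sub_apply] using hvar i j
  have hmean0 : ∀ i, ∫ ω, e ω i ∂μ = 0 := by
    intro i
    have h : ∫ ω, (y ω i - θ i) ∂μ = 0 := by
      rw [integral_sub ((hL2 i).integrable one_le_two) (integrable_const _),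
        hmean i, integral_const]
      simp
    simpa [he, Pi.sub_apply] using h
  -- quadratic forms
  have hquadeq : ∀ (C : Matrix (Fin T) (Fin T) ℝ),
      (fun ω => e ω ⬝ᵥ C.mulVec (e ω))
        = fun ω => ∑ i, ∑ j, C i j * (e ω i * e ω j) := by
    intro C
    funext ω
    simp only [dotProduct, Matrix.mulVec, Finset.mul_sum]
    exact Finset.sum_congr rfl fun i _ => Finset.sum_congr rfl fun j _ => by ring
  have hquadInt : ∀ (C : Matrix (Fin T) (Fin T) ℝ),
      Integrable (fun ω => e ω ⬝ᵥ C.mulVec (e ω)) μ := by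
    intro C
    rw [hquadeq C]
    exact integrable_finset_sum _ fun i _ =>
      integrable_finset_sum _ fun j _ => (hee i j).const_mul _
  have hsymm : ∀ i j, S j i = S i j := by
    intro i j
    have h := congrFun (congrFun hSt i) j
    rwa [Matrix.transpose_apply] at h
  have hquadVal : ∀ (C : Matrix (Fin T) (Fin T) ℝ),
      ∫ ω, e ω ⬝ᵥ C.mulVec (e ω) ∂μ = Matrix.trace (C * S) := by
    intro C
    rw [hquadeq C,
      integral_finset_sum _ (f := fun i ω => ∑ j, C i j * (e ω i * e ω j)) (fun i _ =>
        integrable_finset_sum _ fun j _ => (hee i j).const_mul _)]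
    have hstep : ∀ i : Fin T, ∫ ω, ∑ j, C i j * (e ω i * e ω j) ∂μ
        = ∑ j, C i j * S i j := by
      intro i
      rw [integral_finset_sum _ (f := fun j ω => C i j * (e ω i * e ω j))
        (fun j _ => (hee i j).const_mul _)]
      refine Finset.sum_congr rfl fun j _ => ?_
      rw [integral_const_mul, hcov i j]
    rw [Finset.sum_congr rfl fun i _ => hstep i]
    simp only [Matrix.trace, Matrix.diag, Matrix.mul_apply]
    exact Finset.sum_congr rfl fun i _ => Finset.sum_congr rfl fun j _ => by
      rw [hsymm i j]
  -- linear forms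
  have hlineq : ∀ v : Fin T → ℝ, (fun ω => v ⬝ᵥ e ω) = fun ω => ∑ i, v i * e ω i := by
    intro v; funext ω; simp [dotProduct]
  have hlinInt : ∀ v : Fin T → ℝ, Integrable (fun ω => v ⬝ᵥ e ω) μ := by
    intro v
    rw [hlineq v]
    exact integrable_finset_sum _ fun i _ => (heint i).const_mul _
  have hlinVal : ∀ v : Fin T → ℝ, ∫ ω, v ⬝ᵥ e ω ∂μ = 0 := by
    intro v
    rw [hlineq v, integral_finset_sum _ (fun i _ => (heint i).const_mul _)]
    simp only [integral_const_mul]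
    simp [hmean0]
  -- pointwise identities
  have hyμ : ∀ ω, y ω - μv = e ω + d := by
    intro ω
    show y ω - μv = (y ω - θ) + (θ - μv)
    abel
  set g : Fin T → ℝ := (S * A).mulVec d with hg
  have hvec : ∀ ω, (((1 - M).mulVec μv + M.mulVec (y ω)) - θ)
      = M.mulVec (e ω) - g := by
    intro ω
    have hy : y ω = e ω + θ := by
      show y ω = (y ω - θ) + θ
      abel
    rw [hy, hg, hSA, hd]
    simp only [Matrix.sub_mulVec, Matrix.one_mulVec, Matrix.mulVec_add, Matrix.mulVec_sub]
    abel
  have hgg : g ⬝ᵥ g = d ⬝ᵥ B.mulVec d := by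
    rw [hg, htr (S * A) _ d, hSAt, Matrix.mulVec_mulVec, hASSA, dotProduct_comm]
  have hLpt : ∀ ω, (Matrix.trace S - 2 * Matrix.trace (A * (S * S)) +
        (y ω - μv) ⬝ᵥ B.mulVec (y ω - μv))
      = e ω ⬝ᵥ B.mulVec (e ω) + (B.mulVec d + B.mulVec d) ⬝ᵥ e ω +
        (Matrix.trace S - 2 * Matrix.trace (A * (S * S)) + d ⬝ᵥ B.mulVec d) := by
    intro ω
    rw [hyμ ω]
    have h3 : d ⬝ᵥ B.mulVec (e ω) = (B.mulVec d) ⬝ᵥ e ω := by rw [htr, hBt]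
    have h4 : e ω ⬝ᵥ B.mulVec d = (B.mulVec d) ⬝ᵥ e ω := dotProduct_comm _ _
    simp only [add_dotProduct, dotProduct_add, Matrix.mulVec_add, h3, h4]
    ring
  have hRpt : ∀ ω, ((((1 - M).mulVec μv + M.mulVec (y ω)) - θ) ⬝ᵥ
        (((1 - M).mulVec μv + M.mulVec (y ω)) - θ))
      = e ω ⬝ᵥ ((A * Λ) * M).mulVec (e ω) +
        (-(((A * Λ).mulVec g) + ((A * Λ).mulVec g))) ⬝ᵥ e ω + g ⬝ᵥ g := by
    intro ω
    rw [hvec ω]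
    have h5 : (M.mulVec (e ω)) ⬝ᵥ (M.mulVec (e ω))
        = e ω ⬝ᵥ ((A * Λ) * M).mulVec (e ω) := by
      rw [htr M (M.mulVec (e ω)) (e ω), hMt, Matrix.mulVec_mulVec, dotProduct_comm]
    have h6 : (M.mulVec (e ω)) ⬝ᵥ g = ((A * Λ).mulVec g) ⬝ᵥ e ω := by
      rw [dotProduct_comm, htr M g (e ω), hMt]
    have h7 : g ⬝ᵥ (M.mulVec (e ω)) = ((A * Λ).mulVec g) ⬝ᵥ e ω := by
      rw [htr M g (e ω), hMt]
    simp only [sub_dotProduct, dotProduct_sub, h5, h6, h7,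
      neg_dotProduct, add_dotProduct]
    ring
  -- trace identity
  have htrace : Matrix.trace (((A * Λ) * M) * S)
      = Matrix.trace S - Matrix.trace (A * (S * S)) - Matrix.trace (A * (S * S)) +
        Matrix.trace (B * S) := by
    have t1 : Matrix.trace ((S * A) * S) = Matrix.trace (A * (S * S)) := by
      rw [Matrix.trace_mul_comm, ← Matrix.mul_assoc, Matrix.trace_mul_comm]
    have t2 : Matrix.trace ((A * S) * S) = Matrix.trace (A * (S * S)) := by
      rw [Matrix.mul_assoc]
    rw [hCm, Matrix.add_mul, Matrix.sub_mul, Matrix.sub_mul, Matrix.one_mul,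
      Matrix.trace_add, Matrix.trace_sub, Matrix.trace_sub, t1, t2]
  -- assemble
  calc (∫ ω, (Matrix.trace S - 2 * Matrix.trace (A * (S * S)) +
        (y ω - μv) ⬝ᵥ B.mulVec (y ω - μv)) ∂μ)
      = ∫ ω, (e ω ⬝ᵥ B.mulVec (e ω) + (B.mulVec d + B.mulVec d) ⬝ᵥ e ω +
          (Matrix.trace S - 2 * Matrix.trace (A * (S * S)) + d ⬝ᵥ B.mulVec d)) ∂μ := by
        simp only [hLpt]
    _ = Matrix.trace (B * S) + 0 +
          (Matrix.trace S - 2 * Matrix.trace (A * (S * S)) + d ⬝ᵥ B.mulVec d) := by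
        have hi1 : Integrable (fun ω => e ω ⬝ᵥ B.mulVec (e ω) +
            (B.mulVec d + B.mulVec d) ⬝ᵥ e ω) μ := (hquadInt B).add (hlinInt _)
        rw [integral_add hi1 (integrable_const _),
          integral_add (hquadInt B) (hlinInt _), hquadVal B, hlinVal _, integral_const]
        simp
    _ = Matrix.trace (((A * Λ) * M) * S) + 0 + g ⬝ᵥ g := by
        rw [htrace, hgg]; ring
    _ = ∫ ω, (e ω ⬝ᵥ ((A * Λ) * M).mulVec (e ω) +
          (-(((A * Λ).mulVec g) + ((A * Λ).mulVec g))) ⬝ᵥ e ω + g ⬝ᵥ g) ∂μ := by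
        have hi2 : Integrable (fun ω => e ω ⬝ᵥ ((A * Λ) * M).mulVec (e ω) +
            (-(((A * Λ).mulVec g) + ((A * Λ).mulVec g))) ⬝ᵥ e ω) μ :=
          (hquadInt _).add (hlinInt _)
        rw [integral_add hi2 (integrable_const _),
          integral_add (hquadInt _) (hlinInt _), hquadVal _, hlinVal _, integral_const]
        simp
    _ = ∫ ω,
        (((1 - M).mulVec μv + M.mulVec (y ω)) - θ) ⬝ᵥ
          (((1 - M).mulVec μv + M.mulVec (y ω)) - θ) ∂μ := by
        simp only [hRpt]
end

section
/- Algebraic identity for the URE-minus-loss decomposition: with θ̂_j(μ,Λ) = (I − Λ(Λ+Σ_j)^{-1})μ + Λ(Λ+Σ_j)^{-1}y_j and URE_j(μ,Λ) = tr(Σ_j) − 2tr((Λ+Σ_j)^{-1}Σ_j²) + (y_j−μ)'(Λ+Σ_j)^{-1}Σ_j²(Λ+Σ_j)^{-1}(y_j−μ), one has URE_j(μ,Λ) − ‖θ̂_j(μ,Λ)−θ_j‖² = y_j'y_j − θ_j'θ_j − tr(Σ_j) − 2 tr(Λ(Λ+Σ_j)^{-1}(y_j y_j' − y_j θ_j'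 − Σ_j)) − 2 μ'(Λ+Σ_j)^{-1}Σ_j(y_j − θ_j). -/
open Matrix

private lemma tr_mul_vecMulVec {n : ℕ} (M : Matrix (Fin n) (Fin n) ℝ) (u v : Fin n → ℝ) :
    Matrix.trace (M * Matrix.vecMulVec u v) = v ⬝ᵥ M.mulVec u := by
  simp only [Matrix.trace, Matrix.diag, Matrix.mul_apply, Matrix.vecMulVec_apply,
    dotProduct, Matrix.mulVec, Finset.mul_sum]
  congr 1; ext i; congr 1; ext j; ring

private lemma dot_transpose_mulVec {n : ℕ} (M : Matrix (Fin n) (Fin n) ℝ) (u v : Fin n → ℝ) :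
    u ⬝ᵥ Mᵀ.mulVec v = (M.mulVec u) ⬝ᵥ v := by
  rw [Matrix.dotProduct_mulVec, Matrix.vecMul_transpose]

private lemma scalar_id {n : ℕ} (B : Matrix (Fin n) (Fin n) ℝ) (y θ μ : Fin n → ℝ) :
    ((1 - B) *ᵥ (y - μ)) ⬝ᵥ ((1 - B) *ᵥ (y - μ)) -
      (((y - θ) - (1 - B) *ᵥ (y - μ)) ⬝ᵥ ((y - θ) - (1 - B) *ᵥ (y - μ))) =
    y ⬝ᵥ y - θ ⬝ᵥ θ - 2 * (y ⬝ᵥ B *ᵥ y - θ ⬝ᵥ B *ᵥ y) -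
      2 * (((1 - B) *ᵥ μ) ⬝ᵥ (y - θ)) := by
  simp only [Matrix.sub_mulVec, Matrix.one_mulVec, Matrix.mulVec_sub,
    dotProduct_sub, sub_dotProduct]
  have c1 : (B *ᵥ y) ⬝ᵥ y = y ⬝ᵥ (B *ᵥ y) := dotProduct_comm _ _
  have c2 : (B *ᵥ y) ⬝ᵥ θ = θ ⬝ᵥ (B *ᵥ y) := dotProduct_comm _ _
  have c3 : (B *ᵥ y) ⬝ᵥ μ = μ ⬝ᵥ (B *ᵥ y) := dotProduct_comm _ _
  have c4 : (B *ᵥ μ) ⬝ᵥ y = y ⬝ᵥ (B *ᵥ μ) := dotProduct_comm _ _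
  have c5 : (B *ᵥ μ) ⬝ᵥ θ = θ ⬝ᵥ (B *ᵥ μ) := dotProduct_comm _ _
  have c6 : (B *ᵥ μ) ⬝ᵥ μ = μ ⬝ᵥ (B *ᵥ μ) := dotProduct_comm _ _
  have c7 : θ ⬝ᵥ y = y ⬝ᵥ θ := dotProduct_comm _ _
  have c8 : μ ⬝ᵥ y = y ⬝ᵥ μ := dotProduct_comm _ _
  have c9 : μ ⬝ᵥ θ = θ ⬝ᵥ μ := dotProduct_comm _ _
  have c10 : (B *ᵥ y) ⬝ᵥ (B *ᵥ μ) = (B *ᵥ μ) ⬝ᵥ (B *ᵥ y) := dotProduct_comm _ _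
  rw [c1, c2, c3, c4, c5, c6, c7, c8, c9, c10]
  ring

/-- Deterministic algebraic identity for the URE-minus-loss decomposition:
`URE_j(μ,Λ) − ‖θ̂_j(μ,Λ) − θ_j‖² = y'y − θ'θ − tr Σ − 2 tr(Λ(Λ+Σ)⁻¹(yy' − yθ' − Σ))
  − 2 μ'(Λ+Σ)⁻¹Σ(y − θ)`. -/
theorem ure_minus_loss_identity {T : ℕ}
    (y θ μv : Fin T → ℝ) (S Λ : Matrix (Fin T) (Fin T) ℝ)
    (hS : S.PosDef) (hΛ : Λ.PosSemidef) :
    (Matrix.trace S - 2 * Matrix.trace ((Λ + S)⁻¹ * (S * S)) +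
        (y - μv) ⬝ᵥ ((Λ + S)⁻¹ * (S * S) * (Λ + S)⁻¹).mulVec (y - μv)) -
      ((((1 - Λ * (Λ + S)⁻¹).mulVec μv + (Λ * (Λ + S)⁻¹).mulVec y) - θ) ⬝ᵥ
        (((1 - Λ * (Λ + S)⁻¹).mulVec μv + (Λ * (Λ + S)⁻¹).mulVec y) - θ)) =
      y ⬝ᵥ y - θ ⬝ᵥ θ - Matrix.trace S -
        2 * Matrix.trace
          (Λ * (Λ + S)⁻¹ * (Matrix.vecMulVec y y - Matrix.vecMulVec y θ - S)) -
        2 * (μv ⬝ᵥ ((Λ + S)⁻¹ * S).mulVec (y - θ)) := by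
  set A := (Λ + S)⁻¹ with hA_def
  have hPD : (Λ + S).PosDef := Matrix.PosDef.posSemidef_add hΛ hS
  have hinv : (Λ + S) * A = 1 := Matrix.mul_nonsing_inv _ hPD.det_pos.ne'.isUnit
  have hST : Sᵀ = S := by
    have := hS.isHermitian
    rwa [Matrix.IsHermitian, Matrix.conjTranspose_eq_transpose_of_trivial] at this
  have hAT : Aᵀ = A := by
    rw [hA_def, Matrix.transpose_nonsing_inv]
    congr 1
    have := hPD.isHermitian
    rwa [Matrix.IsHermitian, Matrix.conjTranspose_eq_transpose_of_trivial] at this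
  have hsum : Λ * A + S * A = 1 := by rw [← add_mul]; exact hinv
  have hSA : S * A = 1 - Λ * A := by rw [← hsum]; abel
  have hAS : A * S = (1 - Λ * A)ᵀ := by
    rw [← hSA, Matrix.transpose_mul, hAT, hST]
  -- rewrite the quadratic URE term
  have hquadM : A * (S * S) * A = (1 - Λ * A)ᵀ * (1 - Λ * A) := by
    rw [← hSA, Matrix.transpose_mul, hAT, hST]; noncomm_ring
  have hquad : (y - μv) ⬝ᵥ (A * (S * S) * A) *ᵥ (y - μv) =
      ((1 - Λ * A) *ᵥ (y - μv)) ⬝ᵥ ((1 - Λ * A) *ᵥ (y - μv)) := by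
    rw [hquadM, ← Matrix.mulVec_mulVec, dot_transpose_mulVec]
  -- rewrite the estimator residual
  have hresid : (1 - Λ * A) *ᵥ μv + (Λ * A) *ᵥ y - θ =
      (y - θ) - (1 - Λ * A) *ᵥ (y - μv) := by
    simp only [Matrix.sub_mulVec, Matrix.one_mulVec, Matrix.mulVec_sub]
    abel
  -- rewrite the trace term
  have htrS : Matrix.trace (Λ * A * S) =
      Matrix.trace S - Matrix.trace (A * (S * S)) := by
    have hΛA : Λ * A = 1 - S * A := by rw [← hsum]; abel
    rw [hΛA, Matrix.sub_mul, Matrix.one_mul, Matrix.trace_sub, Matrix.mul_assoc,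
      Matrix.trace_mul_comm S (A * S), Matrix.mul_assoc]
  have htr : Matrix.trace (Λ * A * (Matrix.vecMulVec y y - Matrix.vecMulVec y θ - S)) =
      y ⬝ᵥ (Λ * A) *ᵥ y - θ ⬝ᵥ (Λ * A) *ᵥ y -
        (Matrix.trace S - Matrix.trace (A * (S * S))) := by
    rw [Matrix.mul_sub, Matrix.mul_sub, Matrix.trace_sub, Matrix.trace_sub,
      tr_mul_vecMulVec, tr_mul_vecMulVec, htrS]
  -- rewrite the last term
  have hlast : μv ⬝ᵥ (A * S) *ᵥ (y - θ) = ((1 - Λ * A) *ᵥ μv) ⬝ᵥ (y - θ) := by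
    rw [hAS, dot_transpose_mulVec]
  rw [hquad, hresid, htr, hlast]
  have := scalar_id (Λ * A) y θ μv
  linarith [this]
end

section
/- Quantile subadditivity: for real numbers a_1,…,a_J and b_1,…,b_J and τ ∈ (0,1), the empirical (1−τ)-quantile satisfies q_{1−τ}({a_j + b_j}_{j=1}^J) ≤ q_{1−τ/2}({a_j}_{j=1}^J) + q_{1−τ/2}({b_j}_{j=1}^J). -/
open Finset

/-- Cardinality of `{j : c j ≤ t}` is preserved under composing with the sorting permutation. -/
lemma card_filter_sort {J : ℕ} (c : Fin J → ℝ) (t : ℝ) :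
    (univ.filter (fun j => c j ≤ t)).card
      = (univ.filter (fun i => c (Tuple.sort c i) ≤ t)).card := by
  set e := Tuple.sort c
  rw [← Finset.card_image_of_injective (univ.filter (fun i => c (e i) ≤ t)) e.injective]
  congr 1
  ext j
  simp only [Finset.mem_image, mem_filter, mem_univ, true_and]
  constructor
  · rintro h
    exact ⟨e.symm j, by simpa using h, by simp⟩
  · rintro ⟨i, hi, rfl⟩; exact hi

/-- If at least `k+1` values of `c` are `≤ t`, then the `(k+1)`-th order statistic is `≤ t`. -/
lemma sorted_le_of_card {J k : ℕ} (c : Fin J → ℝ) (t : ℝ) (hk : k < J)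
    (h : k + 1 ≤ (univ.filter (fun j => c j ≤ t)).card) :
    (c ∘ Tuple.sort c) ⟨k, hk⟩ ≤ t := by
  by_contra h'
  push_neg at h'
  rw [card_filter_sort] at h
  have hsub : (univ.filter (fun i => c (Tuple.sort c i) ≤ t))
      ⊆ univ.filter (fun i : Fin J => i < (⟨k, hk⟩ : Fin J)) := by
    intro i hi
    simp only [mem_filter, mem_univ, true_and] at hi ⊢
    by_contra hlt
    push_neg at hlt
    exact absurd (le_trans (Tuple.monotone_sort c hlt) hi) (not_le.mpr h')
  have hcard := Finset.card_le_card hsub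
  have : (univ.filter (fun i : Fin J => i < (⟨k, hk⟩ : Fin J))).card = k := by
    rw [Finset.filter_gt_eq_Iio, Fin.card_Iio]
  omega

/-- At least `k+1` values of `c` are `≤` the `(k+1)`-th order statistic. -/
lemma card_le_sorted {J k : ℕ} (c : Fin J → ℝ) (hk : k < J) :
    k + 1 ≤ (univ.filter (fun j => c j ≤ (c ∘ Tuple.sort c) ⟨k, hk⟩)).card := by
  set e := Tuple.sort c
  set q := (c ∘ e) ⟨k, hk⟩
  have hsub : (univ.filter (fun i : Fin J => i ≤ (⟨k, hk⟩ : Fin J))).image e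
      ⊆ univ.filter (fun j => c j ≤ q) := by
    intro j hj
    simp only [Finset.mem_image, mem_filter, mem_univ, true_and] at hj ⊢
    obtain ⟨i, hi, rfl⟩ := hj
    exact Tuple.monotone_sort c hi
  have h1 : ((univ.filter (fun i : Fin J => i ≤ (⟨k, hk⟩ : Fin J))).image e).card = k + 1 := by
    rw [Finset.card_image_of_injective _ e.injective, Finset.filter_ge_eq_Iic, Fin.card_Iic]
  calc k + 1 = _ := h1.symm
    _ ≤ _ := Finset.card_le_card hsub


/-- The empirical `(1−τ)`-quantile of the finite multiset `{a_1, …, a_J}`: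
the `⌈J(1−τ)⌉`-th order statistic (of the values sorted in increasing order). -/
noncomputable def empQuantile {J : ℕ} (hJ : 0 < J) (τ : ℝ) (hτ : 0 ≤ τ)
    (a : Fin J → ℝ) : ℝ :=
  (a ∘ Tuple.sort a) ⟨⌈(J : ℝ) * (1 - τ)⌉₊ - 1, by
    have hJ0 : (0 : ℝ) ≤ (J : ℝ) := Nat.cast_nonneg J
    have hle : (J : ℝ) * (1 - τ) ≤ (J : ℝ) := by nlinarith
    have h1 : ⌈(J : ℝ) * (1 - τ)⌉₊ ≤ J := Nat.ceil_le.mpr hle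
    omega⟩

/-- Quantile subadditivity: for real numbers `a_j`, `b_j` and `τ ∈ (0,1)`,
`q_{1−τ}({a_j + b_j}) ≤ q_{1−τ/2}({a_j}) + q_{1−τ/2}({b_j})`. -/
theorem empQuantile_add_le {J : ℕ} (hJ : 0 < J) (τ : ℝ) (hτ0 : 0 < τ) (hτ1 : τ < 1)
    (a b : Fin J → ℝ) :
    empQuantile hJ τ hτ0.le (fun j => a j + b j) ≤
      empQuantile hJ (τ / 2) (by positivity) a +
        empQuantile hJ (τ / 2) (by positivity) b := by
  unfold empQuantile
  set m := ⌈(J : ℝ) * (1 - τ / 2)⌉₊ with hm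
  set k := ⌈(J : ℝ) * (1 - τ)⌉₊ with hk
  have hJR : (0 : ℝ) < (J : ℝ) := by exact_mod_cast hJ
  have hm1 : 1 ≤ m := Nat.ceil_pos.mpr (by nlinarith)
  have hk1 : 1 ≤ k := Nat.ceil_pos.mpr (by nlinarith)
  have hmJ : m ≤ J := Nat.ceil_le.mpr (by nlinarith)
  have hmle : (J : ℝ) * (1 - τ / 2) ≤ (m : ℝ) := Nat.le_ceil _
  have hJm : J ≤ 2 * m := by
    have h2 : (J : ℝ) ≤ ((2 * m : ℕ) : ℝ) := by push_cast; nlinarith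
    exact_mod_cast h2
  have hk2m : k ≤ 2 * m - J := by
    rw [hk]
    apply Nat.ceil_le.mpr
    have hc : ((2 * m - J : ℕ) : ℝ) = 2 * (m : ℝ) - (J : ℝ) := by
      push_cast [hJm]; ring
    rw [hc]; nlinarith
  set qa := (a ∘ Tuple.sort a) ⟨m - 1, by omega⟩ with hqa
  set qb := (b ∘ Tuple.sort b) ⟨m - 1, by omega⟩ with hqb
  have hA := card_le_sorted a (show m - 1 < J by omega)
  have hB := card_le_sorted b (show m - 1 < J by omega)
  rw [show m - 1 + 1 = m by omega] at hA hB
  set A := univ.filter (fun j => a j ≤ qa) with hAdef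
  set B := univ.filter (fun j => b j ≤ qb) with hBdef
  have hunion : (A ∪ B).card ≤ J := by
    simpa using Finset.card_le_univ (A ∪ B)
  have hie := Finset.card_inter_add_card_union A B
  have hsub : A ∩ B ⊆ univ.filter (fun j => a j + b j ≤ qa + qb) := by
    intro j hj
    rw [Finset.mem_inter, hAdef, hBdef, mem_filter, mem_filter] at hj
    rw [mem_filter]
    exact ⟨mem_univ j, add_le_add hj.1.2 hj.2.2⟩
  have hcard : k - 1 + 1 ≤ (univ.filter (fun j => a j + b j ≤ qa + qb)).card := by
    have := Finset.card_le_card hsub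
    omega
  exact sorted_le_of_card (fun j => a j + b j) (qa + qb) (show k - 1 < J by omega) hcard
end
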